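/- Every commutative ring of Krull dimension zero is a clean ring. -/

import Mathlib

/-- In a zero-dimensional commutative ring, every element is strongly π-regular. -/
lemma pi_regular_of_zero_dim {A : Type*} [CommRing A]
    (h : ∀ p : Ideal A, p.IsPrime → p.IsMaximal) (a : A) :
    ∃ n x, a ^ n * (1 - a * x) = 0 := by
  by_contra hc
  push_neg at hc
  set S : Submonoid A :=
    { carrier := {y | ∃ n x, y = a ^ n * (1 - a * x)}
      mul_mem' := by
        rintro y z ⟨n, x, rfl⟩ ⟨m, w, rfl⟩
        exact ⟨n + m, x + w - a * x * w, by ring⟩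
      one_mem' := ⟨0, 0, by ring⟩ } with hS
  have hdisj : Disjoint ((⊥ : Ideal A) : Set A) (S : Set A) := by
    rw [Set.disjoint_left]
    rintro y hy ⟨n, x, rfl⟩
    exact hc n x hy
  obtain ⟨p, hp, -, hpd⟩ := Ideal.exists_le_prime_disjoint ⊥ S hdisj
  have hap : a ∉ p := fun hap => Set.disjoint_left.mp hpd hap ⟨1, 0, by ring⟩
  obtain ⟨y, i, hi, hyi⟩ := (h p hp).exists_inv hap
  have : (1 : A) - a * y ∈ p := by
    have : (1 : A) - a * y = i := by linear_combination -hyi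
    rw [this]; exact hi
  exact Set.disjoint_left.mp hpd this ⟨0, y, by ring⟩

theorem zero_dimensional_is_clean (A : Type*) [CommRing A]
    (h : ∀ p : Ideal A, p.IsPrime → p.IsMaximal) :
    ∀ a : A, ∃ e u : A, IsIdempotentElem e ∧ IsUnit u ∧ a = e + u := by
  intro a
  obtain ⟨n, x, hnx⟩ := pi_regular_of_zero_dim h a
  rcases Nat.eq_zero_or_pos n with rfl | hn
  · simp only [pow_zero, one_mul, sub_eq_zero] at hnx
    exact ⟨0, a, IsIdempotentElem.zero, IsUnit.of_mul_eq_one x hnx.symm, by ring⟩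
  · have key : a ^ n = a ^ n * (a * x) := by linear_combination hnx
    have keyk : ∀ k, a ^ n = a ^ n * (a * x) ^ k := by
      intro k
      induction k with
      | zero => simp
      | succ k ih => rw [pow_succ, ← mul_assoc, ← ih]; exact key
    have hee : IsIdempotentElem ((a * x) ^ n) := by
      show (a * x) ^ n * (a * x) ^ n = (a * x) ^ n
      linear_combination (-(x ^ n)) * keyk n
    have h1e : (1 - (a * x) ^ n) ^ n = 1 - (a * x) ^ n := by
      obtain ⟨k, rfl⟩ : ∃ k, n = k + 1 := ⟨n - 1, by omega⟩
      exact (IsIdempotentElem.one_sub hee).pow_succ_eq k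
    have hnil : (a * (1 - (a * x) ^ n)) ^ n = 0 := by
      rw [mul_pow, h1e]
      linear_combination keyk n
    refine ⟨1 - (a * x) ^ n, a - 1 + (a * x) ^ n, IsIdempotentElem.one_sub hee, ?_, by ring⟩
    by_contra hu
    obtain ⟨m, hm, hmem⟩ := exists_max_ideal_of_mem_nonunits hu
    have hprime : m.IsPrime := hm.isPrime
    by_cases hap : a ∈ m
    · have hem : (a * x) ^ n ∈ m := m.pow_mem_of_mem (m.mul_mem_right x hap) n hn
      have h1 : (1 : A) ∈ m := by
        have := m.sub_mem (m.add_mem hem hap) hmem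
        have heq : (a * x) ^ n + a - (a - 1 + (a * x) ^ n) = 1 := by ring
        rwa [heq] at this
      exact hm.ne_top (m.eq_top_of_isUnit_mem h1 isUnit_one)
    · have hmul : a * (1 - (a * x) ^ n) ∈ m :=
        hprime.mem_of_pow_mem n (hnil ▸ m.zero_mem)
      rcases hprime.mem_or_mem hmul with h1 | h2
      · exact hap h1
      · have : a ∈ m := by
          have := m.add_mem hmem h2
          have heq : a - 1 + (a * x) ^ n + (1 - (a * x) ^ n) = a := by ring
          rwa [heq] at this
        exact hap this
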